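/- For all N ≥ 2, all k ∈ {1,…,N−1}, all p ∈ (1/2,1) and every x ∈ {0,…,N}, the boundary-value function a_{N,k} equals the equilibrium exponential moment of the height function: a_{N,k}(x) = E_{π_{N,k}}[λ^{h(ξ)(x)/2}]. -/

import Mathlib

open Filter
open scoped Classical BigOperators Topology

namespace Wasep

/-- Particle configurations on a segment of length `N`
(site `x` of the paper, `x ∈ {1,…,N}`, is index `x-1 : Fin N`). -/
abbrev Conf (N : ℕ) := Fin N → Bool

/-- Number of particles of a configuration. -/
def numParticles {N : ℕ} (ξ : Conf N) : ℕ :=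
  (Finset.univ.filter fun x => ξ x = true).card

/-- The left site of the bond `y` (the paper's site `y`, for `y ∈ {1,…,N-1}`). -/
def siteA {N : ℕ} (y : Fin (N - 1)) : Fin N := ⟨y.1, by have := y.isLt; omega⟩

/-- The right site of the bond `y` (the paper's site `y+1`, for `y ∈ {1,…,N-1}`). -/
def siteB {N : ℕ} (y : Fin (N - 1)) : Fin N := ⟨y.1 + 1, by have := y.isLt; omega⟩

/-- Jump rate of the bond `y` in configuration `ξ`:
`q·1_{ξ(y)<ξ(y+1)} + p·1_{ξ(y)>ξ(y+1)}` with `q = 1-p`. -/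
noncomputable def rate {N : ℕ} (p : ℝ) (ξ : Conf N) (y : Fin (N - 1)) : ℝ :=
  (if ξ (siteA y) = false ∧ ξ (siteB y) = true then 1 - p else 0) +
    (if ξ (siteA y) = true ∧ ξ (siteB y) = false then p else 0)

/-- The configuration `ξ^y`, with the contents of sites `y` and `y+1` swapped. -/
def swapBond {N : ℕ} (ξ : Conf N) (y : Fin (N - 1)) : Conf N :=
  ξ ∘ Equiv.swap (siteA y) (siteB y)

/-- The ASEP generator acting on functions:
`(L f)(ξ) = Σ_{y=1}^{N-1} (q·1_{ξ(y)<ξ(y+1)} + p·1_{ξ(y)>ξ(y+1)})(f(ξ^y) − f(ξ))`. -/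
noncomputable def gen (N : ℕ) (p : ℝ) (f : Conf N → ℝ) (ξ : Conf N) : ℝ :=
  ∑ y : Fin (N - 1), rate p ξ y * (f (swapBond ξ y) - f ξ)

/-- The ASEP generator, as a matrix:  `(L f)(ξ) = Σ_{ξ'} genM(ξ,ξ') f(ξ')`. -/
noncomputable def genM (N : ℕ) (p : ℝ) : Matrix (Conf N) (Conf N) ℝ := fun ξ ξ' =>
  ∑ y : Fin (N - 1),
    rate p ξ y * ((if ξ' = swapBond ξ y then (1 : ℝ) else 0) - (if ξ' = ξ then (1 : ℝ) else 0))

/-- The semigroup `P_t = exp (t L)`; `Pt N p t ξ ξ'` is the transition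
probability from `ξ` to `ξ'` in time `t`. -/
noncomputable def Pt (N : ℕ) (p t : ℝ) (ξ ξ' : Conf N) : ℝ :=
  (NormedSpace.exp (t • LinearMap.toContinuousLinearMap (Matrix.toLin' (genM N p))))
    (fun η => if η = ξ' then (1 : ℝ) else 0) ξ

/-- `λ = p / q`. -/
noncomputable def lam (p : ℝ) : ℝ := p / (1 - p)

/-- The bias `b = p - q`. -/
def bias (p : ℝ) : ℝ := p - (1 - p)

/-- The increasing list of (1-based) particle positions `ξ_1 < ξ_2 < … < ξ_k`. -/
def particlePos {N : ℕ} (ξ : Conf N) : List ℕ :=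
  ((Finset.univ.filter fun x => ξ x = true).sort (· ≤ ·)).map fun x => (x : ℕ) + 1

/-- `A(ξ) = Σ_{i=1}^k (N − k + i − ξ_i)`. -/
def Astat (N k : ℕ) {M : ℕ} (ξ : Conf M) : ℤ :=
  ∑ i ∈ Finset.range k, ((N : ℤ) - k + (i + 1) - ((particlePos ξ).getD i 0 : ℤ))

/-- The partition function `Z_{N,k} = Σ_{ξ ∈ Ω⁰_{N,k}} λ^{−A(ξ)}`. -/
noncomputable def Zpart (N k : ℕ) (p : ℝ) : ℝ :=
  ∑ ξ ∈ Finset.univ.filter (fun ξ : Conf N => numParticles ξ = k), lam p ^ (-Astat N k ξ)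

/-- The invariant measure `π_{N,k}(ξ) = λ^{−A(ξ)}/Z_{N,k}`,
extended by `0` outside of the `k`-particle sector. -/
noncomputable def statMeas (N k : ℕ) (p : ℝ) (ξ : Conf N) : ℝ :=
  if numParticles ξ = k then lam p ^ (-Astat N k ξ) / Zpart N k p else 0

/-- Total variation distance `‖μ − ν‖_TV = sup_A (μ(A) − ν(A))` on a finite space. -/
noncomputable def tvDist {S : Type*} [Fintype S] (μ ν : S → ℝ) : ℝ :=
  ⨆ A : Finset S, (∑ x ∈ A, μ x - ∑ x ∈ A, ν x)

/-- `d^{N,k}(t) = max_{ξ ∈ Ω⁰_{N,k}} ‖P_t(ξ,·) − π_{N,k}‖_TV`. -/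
noncomputable def distEq (N k : ℕ) (p t : ℝ) : ℝ :=
  ⨆ ξ : {ξ : Conf N // numParticles ξ = k},
    tvDist (fun ξ' => Pt N p t ξ.1 ξ') (statMeas N k p)

/-- `T^{N,k}_mix(ε) = inf {t ≥ 0 : d^{N,k}(t) ≤ ε}`. -/
noncomputable def Tmix (N k : ℕ) (p ε : ℝ) : ℝ :=
  sInf {t : ℝ | 0 ≤ t ∧ distEq N k p t ≤ ε}

/-- The height function `h(ξ)(x) = Σ_{y=1}^x (2ξ(y) − 1)`, for `x ∈ {0,…,N}`. -/
def height {N : ℕ} (ξ : Conf N) (x : ℕ) : ℤ :=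
  ∑ y ∈ Finset.univ.filter (fun y : Fin N => (y : ℕ) < x), (if ξ y then (1 : ℤ) else -1)

/-- Pointwise order on height functions. -/
def heightLE {N : ℕ} (ξ ξ' : Conf N) : Prop := ∀ x ≤ N, height ξ x ≤ height ξ' x

/-- `ϱ = (√p − √q)²`. -/
noncomputable def rho (p : ℝ) : ℝ := (Real.sqrt p - Real.sqrt (1 - p)) ^ 2

/-- The spectral gap `gap_N = (√p − √q)² + 4√(pq)·sin²(π/(2N))`. -/
noncomputable def gapN (N : ℕ) (p : ℝ) : ℝ :=
  rho p + 4 * Real.sqrt (p * (1 - p)) * Real.sin (Real.pi / (2 * N)) ^ 2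

/-- `a` solves the boundary value problem `√(pq)·Δa(x) = ϱ·a(x)` on `{1,…,N−1}`
with `a(0) = 1` and `a(N) = λ^{(2k−N)/2}`, defining `a_{N,k}`. -/
def IsBVP (N k : ℕ) (p : ℝ) (a : ℕ → ℝ) : Prop :=
  a 0 = 1 ∧ a N = lam p ^ ((2 * (k : ℝ) - N) / 2) ∧
    ∀ x : ℕ, 1 ≤ x → x ≤ N - 1 →
      Real.sqrt (p * (1 - p)) * (a (x + 1) + a (x - 1) - 2 * a x) = rho p * a x

/-- `f^{(j)}_{N,k}(ζ) = Σ_{x=1}^{N-1} sin(jπx/N)·(λ^{ζ(x)/2} − a_{N,k}(x))/(λ−1)`,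
viewed as a function of the particle configuration via the height function. -/
noncomputable def eigenF (N : ℕ) (p : ℝ) (a : ℕ → ℝ) (j : ℕ) (ξ : Conf N) : ℝ :=
  ∑ x ∈ Finset.Icc 1 (N - 1),
    Real.sin ((j : ℝ) * Real.pi * x / N) *
      ((lam p ^ ((height ξ x : ℝ) / 2) - a x) / (lam p - 1))

/-- `f^{(0)}_{N,k}(ζ) = Σ_{x=1}^{N-1} (λ^{ζ(x)/2} − a_{N,k}(x))/(λ−1)`. -/
noncomputable def fZero (N : ℕ) (p : ℝ) (a : ℕ → ℝ) (ξ : Conf N) : ℝ :=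
  ∑ x ∈ Finset.Icc 1 (N - 1), (lam p ^ ((height ξ x : ℝ) / 2) - a x) / (lam p - 1)

/-- The maximal configuration `ξ^max` (particles on sites `1,…,k`);
its height function is `∧`. -/
def confMax (N k : ℕ) : Conf N := fun x => decide ((x : ℕ) < k)

/-- The minimal configuration `ξ^min` (particles on sites `N−k+1,…,N`);
its height function is `∨`. -/
def confMin (N k : ℕ) : Conf N := fun x => decide (N - k ≤ (x : ℕ))

/-- `π_{N,k}(ξ(x) = 1)` for the (0-based) site `x : Fin N`. -/
noncomputable def occProb (N k : ℕ) (p : ℝ) (x : Fin N) : ℝ :=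
  ∑ ξ ∈ Finset.univ.filter (fun ξ : Conf N => ξ x = true), statMeas N k p ξ

/-- `ℓ_N(ξ) = min {x ∈ {1,…,N} : ξ(x) = 1}`, the position of the leftmost particle. -/
noncomputable def leftPos {N : ℕ} (ξ : Conf N) : ℕ :=
  sInf {x | ∃ y : Fin N, ξ y = true ∧ x = (y : ℕ) + 1}

/-- `r_N(ξ) = max {x ∈ {1,…,N} : ξ(x) = 0}`, the position of the rightmost empty site. -/
noncomputable def rightEmpty {N : ℕ} (ξ : Conf N) : ℕ :=
  sSup {x | ∃ y : Fin N, ξ y = false ∧ x = (y : ℕ) + 1}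

/-- `Q₁(ξ)`: maximal length of a run of consecutive empty sites. -/
noncomputable def runEmpty {N : ℕ} (ξ : Conf N) : ℕ :=
  sSup {n | 1 ≤ n ∧ ∃ i, i + n ≤ N ∧
    ∀ y : Fin N, i ≤ (y : ℕ) → (y : ℕ) < i + n → ξ y = false}

/-- `Q₂(ξ)`: maximal length of a run of consecutive occupied sites. -/
noncomputable def runFull {N : ℕ} (ξ : Conf N) : ℕ :=
  sSup {n | 1 ≤ n ∧ ∃ i, i + n ≤ N ∧
    ∀ y : Fin N, i ≤ (y : ℕ) → (y : ℕ) < i + n → ξ y = true}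

/-- `Q(ξ) = max(Q₁(ξ), Q₂(ξ))`. -/
noncomputable def Qmax {N : ℕ} (ξ : Conf N) : ℕ := max (runEmpty ξ) (runFull ξ)

/-- `L_N(ζ) = max{x : ζ(x) = −x}` for a height function `ζ`. -/
noncomputable def LNh {N : ℕ} (ξ : Conf N) : ℕ :=
  sSup {x | x ≤ N ∧ height ξ x = -(x : ℤ)}

/-- `R_N(ζ) = min{x : ζ(x) = x − 2(N−k)}` for a height function `ζ`. -/
noncomputable def RNh (k : ℕ) {N : ℕ} (ξ : Conf N) : ℕ :=
  sInf {x | x ≤ N ∧ height ξ x = (x : ℤ) - 2 * ((N : ℤ) - k)}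

/-- `D_N(ζ) = max(|L_N(ζ) − (N−k)|, |R_N(ζ) − (N−k)|)`. -/
noncomputable def DNh (k : ℕ) {N : ℕ} (ξ : Conf N) : ℤ :=
  max |(LNh ξ : ℤ) - ((N : ℤ) - k)| |(RNh k ξ : ℤ) - ((N : ℤ) - k)|

/-- `H_ζ(x) = λ^{(N−k)/2}·(λ^{ζ(x)/2} − a_{N,k}(x))/(λ−1)`. -/
noncomputable def Hfun (N k : ℕ) (p : ℝ) (a : ℕ → ℝ) (ξ : Conf N) (x : ℕ) : ℝ :=
  lam p ^ (((N : ℝ) - k) / 2) * ((lam p ^ ((height ξ x : ℝ) / 2) - a x) / (lam p - 1))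

/-- Variance of `f` under the (probability vector) `μ`. -/
noncomputable def varOf {S : Type*} [Fintype S] (μ f : S → ℝ) : ℝ :=
  (∑ x, μ x * f x ^ 2) - (∑ x, μ x * f x) ^ 2

/-- Total variation distance between the pushforwards of `μ` and `ν` by `g`. -/
noncomputable def tvPush {S : Type*} [Fintype S] (μ ν : S → ℝ) (g : S → ℕ) : ℝ :=
  ⨆ A : Set ℕ,
    ((∑ x ∈ Finset.univ.filter (fun x => g x ∈ A), μ x) -
      ∑ x ∈ Finset.univ.filter (fun x => g x ∈ A), ν x)

/-- The scaling limit `ℓ_α(t)` of the (rescaled) position of the leftmost particle. -/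
noncomputable def ellAlpha (α t : ℝ) : ℝ :=
  if t ≤ α then 0
  else if (Real.sqrt α + Real.sqrt (1 - α)) ^ 2 ≤ t then 1 - α
  else (Real.sqrt t - Real.sqrt α) ^ 2

/-- The scaling limit `r_α(t)` of the (rescaled) position of the rightmost empty site. -/
noncomputable def rAlpha (α t : ℝ) : ℝ :=
  if t ≤ 1 - α then 1
  else if (Real.sqrt α + Real.sqrt (1 - α)) ^ 2 ≤ t then 1 - α
  else 1 - (Real.sqrt t - Real.sqrt (1 - α)) ^ 2

end Wasep

namespace Wasep

variable {N : ℕ}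

lemma lam_gt_one {p : ℝ} (hp : p ∈ Set.Ioo (1/2 : ℝ) 1) : 1 < lam p := by
  obtain ⟨h1, h2⟩ := hp
  rw [lam, lt_div_iff₀ (by linarith)]
  linarith

lemma lam_pos {p : ℝ} (hp : p ∈ Set.Ioo (1/2 : ℝ) 1) : 0 < lam p :=
  lt_trans one_pos (lam_gt_one hp)

lemma height_zero (ξ : Conf N) : height ξ 0 = 0 := by simp [height]

lemma height_succ (ξ : Conf N) (x : ℕ) (hx : x < N) :
    height ξ (x+1) = height ξ x + (if ξ ⟨x, hx⟩ then 1 else -1) := by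
  unfold height
  have hset : (Finset.univ.filter fun y : Fin N => (y:ℕ) < x+1)
      = insert ⟨x,hx⟩ (Finset.univ.filter fun y : Fin N => (y:ℕ) < x) := by
    ext y
    simp only [Finset.mem_insert, Finset.mem_filter, Finset.mem_univ, true_and]
    constructor
    · intro h
      rcases Nat.lt_succ_iff_lt_or_eq.1 h with h|h
      · exact Or.inr h
      · exact Or.inl (Fin.ext h)
    · rintro (rfl|h)
      · simp
      · omega
  rw [hset, Finset.sum_insert (by simp)]
  ring

lemma height_last (ξ : Conf N) : height ξ N = 2 * (numParticles ξ : ℤ) - N := by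
  unfold height numParticles
  rw [Finset.filter_true_of_mem (fun y _ => y.isLt)]
  have h1 : ∀ y : Fin N, (if ξ y then (1:ℤ) else -1)
      = 2 * (if ξ y = true then (1:ℤ) else 0) - 1 := by
    intro y; by_cases h : ξ y <;> simp [h]
  rw [Finset.sum_congr rfl fun y _ => h1 y, Finset.sum_sub_distrib, ← Finset.mul_sum]
  rw [Finset.card_filter]
  push_cast
  simp [Finset.card_univ]

lemma sum_getD (l : List ℕ) :
    ∑ i ∈ Finset.range l.length, (l.getD i 0 : ℤ) = (l.sum : ℤ) := by
  induction l with
  | nil => simp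
  | cons a t ih =>
    rw [List.length_cons, Finset.sum_range_succ']
    simp only [List.getD_cons_succ, List.getD_cons_zero, List.sum_cons]
    rw [ih]; push_cast; ring

lemma particlePos_eq (ξ : Conf N) :
    particlePos ξ = ((Finset.univ.filter fun x => ξ x = true).sort (· ≤ ·)).map
      (fun x : Fin N => (x:ℕ)+1) := by
  unfold particlePos
  generalize ((Finset.univ.filter fun x => ξ x = true).sort (· ≤ ·)) = l
  induction l with
  | nil => rfl
  | cons a t ih => simpa using ih

lemma particlePos_length (ξ : Conf N) : (particlePos ξ).length = numParticles ξ := by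
  rw [particlePos_eq, List.length_map, Finset.length_sort]; rfl

/-- Sum of (1-based) particle positions. -/
def posSum (ξ : Conf N) : ℤ :=
  ∑ y ∈ Finset.univ.filter (fun y => ξ y = true), ((y:ℤ)+1)

lemma particlePos_sum (ξ : Conf N) :
    ((particlePos ξ).sum : ℤ) = posSum ξ := by
  rw [particlePos_eq]
  unfold posSum
  have hperm := ((Finset.sort_perm_toList
      (Finset.univ.filter fun x : Fin N => ξ x = true) (· ≤ ·)).map
      (fun x : Fin N => (x:ℕ)+1))
  rw [hperm.sum_eq, Finset.sum_map_toList]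
  push_cast
  rfl

lemma Astat_eq {k : ℕ} (ξ : Conf N) (h : numParticles ξ = k) :
    Astat N k ξ = (∑ i ∈ Finset.range k, ((N:ℤ) - k + (i+1))) - posSum ξ := by
  unfold Astat
  rw [Finset.sum_sub_distrib]
  congr 1
  rw [← h, ← particlePos_length ξ, sum_getD, particlePos_sum]


lemma numParticles_comp (ξ : Conf N) (e : Equiv.Perm (Fin N)) :
    numParticles (fun y => ξ (e y)) = numParticles ξ := by
  unfold numParticles
  rw [Finset.card_filter, Finset.card_filter]
  exact Equiv.sum_comp e (fun y => if ξ y = true then 1 else 0)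

lemma posSum_swap (ξ : Conf N) {a b : Fin N} (ha : ξ a = true) (hb : ξ b = false)
    (hne : a ≠ b) :
    posSum (fun y => ξ (Equiv.swap a b y)) = posSum ξ + ((b:ℤ) - (a:ℤ)) := by
  unfold posSum
  rw [Finset.sum_filter, Finset.sum_filter]
  have h1 : ∀ y : Fin N, (if ξ (Equiv.swap a b y) = true then ((y:ℤ)+1) else 0)
      = (fun z => if ξ z = true then ((Equiv.swap a b z : ℤ)+1) else 0) (Equiv.swap a b y) := by
    intro y
    simp only [Equiv.swap_apply_self]
  rw [Finset.sum_congr rfl fun y _ => h1 y, Equiv.sum_comp (Equiv.swap a b) (fun z => if ξ z = true then ((Equiv.swap a b z : ℤ)+1) else 0)]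
  have h2 : ∀ z : Fin N, (if ξ z = true then ((Equiv.swap a b z : ℤ)+1) else 0)
      = (if ξ z = true then ((z:ℤ)+1) else 0)
        + (if z = a then ((b:ℤ) - (a:ℤ)) else 0) := by
    intro z
    rcases eq_or_ne z a with rfl | hza
    · simp only [Equiv.swap_apply_left, ha, if_pos rfl, if_true]
      push_cast
      ring
    · rcases eq_or_ne z b with rfl | hzb
      · simp [hb, hza]
      · rw [Equiv.swap_apply_of_ne_of_ne hza hzb]
        simp [hza]
  rw [Finset.sum_congr rfl fun z _ => h2 z, Finset.sum_add_distrib,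
    Finset.sum_ite_eq' Finset.univ a fun _ => ((b:ℤ) - (a:ℤ))]
  simp

lemma height_swap (ξ : Conf N) {a b : Fin N} (hab : (a:ℕ) + 1 = (b:ℕ)) (x : ℕ)
    (hax : (a:ℕ) < x) (hbx : x ≤ (b:ℕ)) :
    height (fun y => ξ (Equiv.swap a b y)) x
      = height ξ x + ((if ξ b then (1:ℤ) else -1) - (if ξ a then 1 else -1)) := by
  unfold height
  have key : ∑ y ∈ Finset.univ.filter (fun y : Fin N => (y:ℕ) < x),
      ((if ξ (Equiv.swap a b y) then (1:ℤ) else -1) - (if ξ y then 1 else -1))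
      = (if ξ b then (1:ℤ) else -1) - (if ξ a then 1 else -1) := by
    rw [Finset.sum_eq_single_of_mem a (by simp [hax])]
    · rw [Equiv.swap_apply_left]
    · intro y hy hne
      have hyb : y ≠ b := by
        intro h; subst h
        simp only [Finset.mem_filter] at hy
        omega
      rw [Equiv.swap_apply_of_ne_of_ne hne hyb]
      ring
  rw [← key, ← Finset.sum_add_distrib]
  exact Finset.sum_congr rfl fun y _ => by ring

lemma numParticles_confMax {k : ℕ} (hkN : k ≤ N) : numParticles (confMax N k) = k := by
  unfold numParticles confMax
  rw [Finset.card_filter]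
  simp only [decide_eq_true_eq]
  rw [Fin.sum_univ_eq_sum_range (fun i => if i < k then 1 else 0)]
  rw [← Finset.card_filter]
  rw [show (Finset.range N).filter (· < k) = Finset.range k from by
    ext i; simp only [Finset.mem_filter, Finset.mem_range]; omega]
  exact Finset.card_range k

lemma Zpart_pos {k : ℕ} {p : ℝ} (hp : p ∈ Set.Ioo (1/2:ℝ) 1) (hkN : k ≤ N) :
    0 < Zpart N k p := by
  apply Finset.sum_pos
  · intro ξ _
    exact zpow_pos (lam_pos hp) _
  · exact ⟨confMax N k, by simp [numParticles_confMax hkN]⟩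

lemma statMeas_sum {k : ℕ} {p : ℝ} (hp : p ∈ Set.Ioo (1/2:ℝ) 1) (hkN : k ≤ N) :
    ∑ ξ : Conf N, statMeas N k p ξ = 1 := by
  unfold statMeas
  rw [← Finset.sum_filter, ← Finset.sum_div]
  exact div_self (ne_of_gt (Zpart_pos hp hkN))


lemma rpow_shift {L : ℝ} (hL : 0 < L) (h m : ℤ) :
    L ^ (((h + m : ℤ) : ℝ)/2) = L ^ ((h:ℝ)/2) * L ^ ((m:ℝ)/2) := by
  rw [← Real.rpow_add hL]
  push_cast
  ring_nf

lemma swap_weight (N k : ℕ) (p : ℝ) (hp : p ∈ Set.Ioo (1/2:ℝ) 1)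
    (a b : Fin N) (hab : (a:ℕ) + 1 = (b:ℕ)) (ξ : Conf N)
    (hξa : ξ a = true) (hξb : ξ b = false) :
    statMeas N k p (fun y => ξ (Equiv.swap a b y)) *
      lam p ^ ((height (fun y => ξ (Equiv.swap a b y)) ((a:ℕ)+1) : ℝ)/2)
    = statMeas N k p ξ * lam p ^ ((height ξ ((a:ℕ)+1) : ℝ)/2) := by
  have hL := lam_pos hp
  have hne : a ≠ b := fun h => by rw [h] at hab; omega
  have hnp := numParticles_comp ξ (Equiv.swap a b)
  have hh : height (fun y => ξ (Equiv.swap a b y)) ((a:ℕ)+1)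
      = height ξ ((a:ℕ)+1) + (-2) := by
    rw [height_swap ξ hab ((a:ℕ)+1) (Nat.lt_succ_self _) (by omega), hξa, hξb]
    norm_num
  unfold statMeas
  rw [hnp]
  by_cases hk : numParticles ξ = k
  · rw [if_pos hk, if_pos hk]
    have hA : Astat N k (fun y => ξ (Equiv.swap a b y)) = Astat N k ξ - 1 := by
      have hnp' : numParticles (fun y => ξ (Equiv.swap a b y)) = k := by rw [hnp, hk]
      rw [Astat_eq _ hnp', Astat_eq ξ hk, posSum_swap ξ hξa hξb hne]
      have hba : ((b:ℤ) - (a:ℤ)) = 1 := by push_cast; omega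
      rw [hba]; ring
    rw [hA, hh, rpow_shift hL (height ξ ((a:ℕ)+1)) (-2),
      show (((-2:ℤ)):ℝ)/2 = (-1:ℝ) by norm_num, Real.rpow_neg_one]
    have hz : lam p ^ (-(Astat N k ξ - 1)) = lam p ^ (-Astat N k ξ) * lam p := by
      rw [show -(Astat N k ξ - 1) = -Astat N k ξ + 1 by ring, zpow_add₀ (ne_of_gt hL), zpow_one]
    rw [hz]
    have key : ∀ c : ℝ, (lam p ^ (-Astat N k ξ) * lam p) / Zpart N k p * (c * (lam p)⁻¹)
        = lam p ^ (-Astat N k ξ) / Zpart N k p * c := by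
      intro c
      rw [div_eq_mul_inv, div_eq_mul_inv]
      have hcancel : lam p * (lam p)⁻¹ = 1 := mul_inv_cancel₀ (ne_of_gt hL)
      linear_combination (lam p ^ (-Astat N k ξ) * (Zpart N k p)⁻¹ * c) * hcancel
    exact key _
  · rw [if_neg hk, if_neg hk]
    ring

lemma pair_cancel (N k : ℕ) (p : ℝ) (hp : p ∈ Set.Ioo (1/2:ℝ) 1)
    (a b : Fin N) (hab : (a:ℕ)+1 = (b:ℕ)) :
    ∑ ξ : Conf N, statMeas N k p ξ * lam p ^ ((height ξ ((a:ℕ)+1) : ℝ)/2) *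
      ((if ξ b then (1:ℝ) else 0) - (if ξ a then 1 else 0)) = 0 := by
  set f : Conf N → ℝ := fun ξ => statMeas N k p ξ * lam p ^ ((height ξ ((a:ℕ)+1) : ℝ)/2) *
      ((if ξ b then (1:ℝ) else 0) - (if ξ a then 1 else 0)) with hf
  have hinv : Function.Involutive (fun ξ : Conf N => fun y => ξ (Equiv.swap a b y)) := by
    intro ξ; funext y; simp [Equiv.swap_apply_self]
  have main : ∀ ξ : Conf N, ξ a = true → ξ b = false →
      f (fun y => ξ (Equiv.swap a b y)) = - f ξ := by
    intro ξ ha' hb'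
    have hsw := swap_weight N k p hp a b hab ξ ha' hb'
    simp only [hf, Equiv.swap_apply_left, Equiv.swap_apply_right, ha', hb']
    rw [hsw]
    norm_num
  have hkey : ∀ ξ : Conf N, f (fun y => ξ (Equiv.swap a b y)) = - f ξ := by
    intro ξ
    rcases Bool.eq_false_or_eq_true (ξ a) with ha'|ha' <;>
      rcases Bool.eq_false_or_eq_true (ξ b) with hb'|hb'
    · -- both true
      have hfix : (fun y => ξ (Equiv.swap a b y)) = ξ := by
        funext y
        rcases eq_or_ne y a with rfl|hya
        · rw [Equiv.swap_apply_left, hb', ha']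
        · rcases eq_or_ne y b with rfl|hyb
          · rw [Equiv.swap_apply_right, ha', hb']
          · rw [Equiv.swap_apply_of_ne_of_ne hya hyb]
      rw [hfix]
      have : f ξ = 0 := by simp only [hf, ha', hb']; norm_num
      rw [this]; ring
    · -- ξ a = true, ξ b = false
      exact main ξ ha' hb'
    · -- ξ a = false, ξ b = true
      have h1 : (fun y => ξ (Equiv.swap a b y)) a = true := by
        simp only [Equiv.swap_apply_left, hb']
      have h2 : (fun y => ξ (Equiv.swap a b y)) b = false := by
        simp only [Equiv.swap_apply_right, ha']
      have := main (fun y => ξ (Equiv.swap a b y)) h1 h2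
      have hii : (fun y => (fun y' => ξ (Equiv.swap a b y')) (Equiv.swap a b y)) = ξ := by
        funext y; simp [Equiv.swap_apply_self]
      rw [hii] at this
      linarith
    · -- both false
      have hfix : (fun y => ξ (Equiv.swap a b y)) = ξ := by
        funext y
        rcases eq_or_ne y a with rfl|hya
        · rw [Equiv.swap_apply_left, hb', ha']
        · rcases eq_or_ne y b with rfl|hyb
          · rw [Equiv.swap_apply_right, ha', hb']
          · rw [Equiv.swap_apply_of_ne_of_ne hya hyb]
      rw [hfix]
      have : f ξ = 0 := by simp only [hf, ha', hb']; norm_num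
      rw [this]; ring
  have h1 : ∑ ξ : Conf N, f (fun y => ξ (Equiv.swap a b y)) = ∑ ξ : Conf N, f ξ :=
    Fintype.sum_bijective _ hinv.bijective _ _ (fun ξ => rfl)
  have h2 : ∑ ξ : Conf N, f (fun y => ξ (Equiv.swap a b y)) = - ∑ ξ : Conf N, f ξ := by
    rw [Finset.sum_congr rfl fun ξ _ => hkey ξ, Finset.sum_neg_distrib]
  linarith [h1, h2]


lemma sqrt_pq_pos {p : ℝ} (hp : p ∈ Set.Ioo (1/2:ℝ) 1) : 0 < Real.sqrt (p * (1 - p)) := by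
  obtain ⟨h1, h2⟩ := hp
  apply Real.sqrt_pos.2
  nlinarith

lemma rho_pos {p : ℝ} (hp : p ∈ Set.Ioo (1/2:ℝ) 1) : 0 < rho p := by
  obtain ⟨h1, h2⟩ := hp
  have hlt : Real.sqrt (1 - p) < Real.sqrt p := Real.sqrt_lt_sqrt (by linarith) (by linarith)
  have : 0 < Real.sqrt p - Real.sqrt (1 - p) := by linarith
  exact pow_pos this 2

lemma rho_eq {p : ℝ} (hp : p ∈ Set.Ioo (1/2:ℝ) 1) :
    rho p = 1 - 2 * Real.sqrt (p * (1 - p)) := by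
  obtain ⟨h1, h2⟩ := hp
  unfold rho
  have hm : Real.sqrt p * Real.sqrt (1 - p) = Real.sqrt (p * (1 - p)) :=
    (Real.sqrt_mul (by linarith : (0:ℝ) ≤ p) _).symm
  linear_combination Real.sq_sqrt (by linarith : (0:ℝ) ≤ p)
    + Real.sq_sqrt (by linarith : (0:ℝ) ≤ 1 - p) - 2 * hm

lemma sqrt_mul_c1 {p : ℝ} (hp : p ∈ Set.Ioo (1/2:ℝ) 1) :
    Real.sqrt (p * (1 - p)) * lam p ^ ((((1:ℤ)):ℝ)/2) = p := by
  obtain ⟨h1, h2⟩ := hp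
  have hL := lam_pos ⟨h1, h2⟩
  rw [show (((1:ℤ)):ℝ)/2 = (1/2 : ℝ) by norm_num, ← Real.sqrt_eq_rpow,
    ← Real.sqrt_mul (by nlinarith : (0:ℝ) ≤ p * (1 - p))]
  rw [show p * (1 - p) * lam p = p ^ 2 by unfold lam; field_simp [show (1:ℝ) - p ≠ 0 by linarith]]
  exact Real.sqrt_sq (by linarith)

lemma sqrt_mul_c1inv {p : ℝ} (hp : p ∈ Set.Ioo (1/2:ℝ) 1) :
    Real.sqrt (p * (1 - p)) * lam p ^ ((((-1:ℤ)):ℝ)/2) = 1 - p := by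
  obtain ⟨h1, h2⟩ := hp
  have hL := lam_pos ⟨h1, h2⟩
  rw [show (((-1:ℤ)):ℝ)/2 = -(1/2 : ℝ) by norm_num, Real.rpow_neg hL.le,
    ← Real.sqrt_eq_rpow, ← Real.sqrt_inv,
    ← Real.sqrt_mul (by nlinarith : (0:ℝ) ≤ p * (1 - p))]
  rw [show p * (1 - p) * (lam p)⁻¹ = (1 - p) ^ 2 by unfold lam; rw [inv_div]; field_simp [show p ≠ 0 by linarith]]
  exact Real.sqrt_sq (by linarith)

lemma g_isBVP (N k : ℕ) (p : ℝ) (hN : 2 ≤ N) (hk1 : 1 ≤ k) (hkN : k < N)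
    (hp : p ∈ Set.Ioo (1/2:ℝ) 1) :
    IsBVP N k p (fun x => ∑ ξ : Conf N, statMeas N k p ξ * lam p ^ ((height ξ x : ℝ)/2)) := by
  have hL := lam_pos hp
  refine ⟨?_, ?_, ?_⟩
  · -- x = 0
    have h0 : ∀ ξ : Conf N, statMeas N k p ξ * lam p ^ ((height ξ 0 : ℝ)/2)
        = statMeas N k p ξ := by
      intro ξ; rw [height_zero]; norm_num
    show (∑ ξ : Conf N, statMeas N k p ξ * lam p ^ ((height ξ 0 : ℝ)/2)) = 1
    rw [Finset.sum_congr rfl fun ξ _ => h0 ξ]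
    exact statMeas_sum hp hkN.le
  · -- x = N
    have hconst : ∀ ξ : Conf N, statMeas N k p ξ * lam p ^ ((height ξ N : ℝ)/2)
        = statMeas N k p ξ * lam p ^ ((2*(k:ℝ) - N)/2) := by
      intro ξ
      by_cases hc : numParticles ξ = k
      · rw [height_last, hc]
        congr 2
        push_cast
        ring
      · have hz : statMeas N k p ξ = 0 := by unfold statMeas; rw [if_neg hc]
        rw [hz]; ring
    show (∑ ξ : Conf N, statMeas N k p ξ * lam p ^ ((height ξ N : ℝ)/2))
      = lam p ^ ((2*(k:ℝ) - N)/2)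
    rw [Finset.sum_congr rfl fun ξ _ => hconst ξ, ← Finset.sum_mul,
      statMeas_sum hp hkN.le, one_mul]
  · -- interior
    intro x hx1 hx2
    obtain ⟨u, rfl⟩ : ∃ u, x = u + 1 := ⟨x - 1, by omega⟩
    have hu1 : u + 1 < N := by omega
    have hu : u < N := by omega
    show Real.sqrt (p * (1 - p)) *
        ((∑ ξ : Conf N, statMeas N k p ξ * lam p ^ ((height ξ (u+1+1) : ℝ)/2))
          + (∑ ξ : Conf N, statMeas N k p ξ * lam p ^ ((height ξ u : ℝ)/2))
          - 2 * (∑ ξ : Conf N, statMeas N k p ξ * lam p ^ ((height ξ (u+1) : ℝ)/2)))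
      = rho p * (∑ ξ : Conf N, statMeas N k p ξ * lam p ^ ((height ξ (u+1) : ℝ)/2))
    have hs1 := sqrt_mul_c1 hp
    have hs2 := sqrt_mul_c1inv hp
    have hrho := rho_eq hp
    have per : ∀ ξ : Conf N,
        Real.sqrt (p * (1 - p)) *
          (statMeas N k p ξ * lam p ^ ((height ξ (u+1+1) : ℝ)/2)
            + statMeas N k p ξ * lam p ^ ((height ξ u : ℝ)/2)
            - 2 * (statMeas N k p ξ * lam p ^ ((height ξ (u+1) : ℝ)/2)))
        = rho p * (statMeas N k p ξ * lam p ^ ((height ξ (u+1) : ℝ)/2))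
          + (2*p - 1) * (statMeas N k p ξ * lam p ^ ((height ξ (u+1) : ℝ)/2) *
              ((if ξ ⟨u+1, hu1⟩ then (1:ℝ) else 0) - (if ξ ⟨u, hu⟩ then 1 else 0))) := by
      intro ξ
      have e2 := height_succ ξ (u+1) hu1
      have e1 := height_succ ξ u hu
      rcases Bool.eq_false_or_eq_true (ξ ⟨u, hu⟩) with ha'|ha' <;>
        rcases Bool.eq_false_or_eq_true (ξ ⟨u+1, hu1⟩) with hb'|hb' <;>
          rw [ha'] at e1 <;> rw [hb'] at e2 <;> rw [ha', hb'] <;>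
            simp only [Bool.false_eq_true, eq_self_iff_true, if_true, if_false] at e1 e2 ⊢
      · -- ξ a = true, ξ b = true : e1 : h(u+1) = h u + 1, e2 : h(u+2) = h(u+1) + 1
        rw [e2, show height ξ u = height ξ (u+1) + (-1) from by omega,
          rpow_shift hL _ 1, rpow_shift hL _ (-1)]
        linear_combination (statMeas N k p ξ * lam p ^ ((height ξ (u+1) : ℝ)/2)) * hs1
          + (statMeas N k p ξ * lam p ^ ((height ξ (u+1) : ℝ)/2)) * hs2
          - (statMeas N k p ξ * lam p ^ ((height ξ (u+1) : ℝ)/2)) * hrho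
      · -- ξ a = true, ξ b = false
        rw [e2, show height ξ u = height ξ (u+1) + (-1) from by omega,
          rpow_shift hL _ (-1)]
        linear_combination (2 * statMeas N k p ξ * lam p ^ ((height ξ (u+1) : ℝ)/2)) * hs2
          - (statMeas N k p ξ * lam p ^ ((height ξ (u+1) : ℝ)/2)) * hrho
      · -- ξ a = false, ξ b = true
        rw [e2, show height ξ u = height ξ (u+1) + 1 from by omega,
          rpow_shift hL _ 1]
        linear_combination (2 * statMeas N k p ξ * lam p ^ ((height ξ (u+1) : ℝ)/2)) * hs1
          - (statMeas N k p ξ * lam p ^ ((height ξ (u+1) : ℝ)/2)) * hrho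
      · -- ξ a = false, ξ b = false
        rw [e2, show height ξ u = height ξ (u+1) + 1 from by omega,
          rpow_shift hL _ (-1), rpow_shift hL _ 1]
        linear_combination (statMeas N k p ξ * lam p ^ ((height ξ (u+1) : ℝ)/2)) * hs1
          + (statMeas N k p ξ * lam p ^ ((height ξ (u+1) : ℝ)/2)) * hs2
          - (statMeas N k p ξ * lam p ^ ((height ξ (u+1) : ℝ)/2)) * hrho
    have hpair : ∑ ξ : Conf N, statMeas N k p ξ * lam p ^ ((height ξ (u+1) : ℝ)/2) *
        ((if ξ ⟨u+1, hu1⟩ then (1:ℝ) else 0) - (if ξ ⟨u, hu⟩ then 1 else 0)) = 0 :=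
      pair_cancel N k p hp ⟨u, hu⟩ ⟨u+1, hu1⟩ rfl
    rw [Finset.mul_sum (Finset.univ) (fun ξ : Conf N => statMeas N k p ξ * lam p ^ ((height ξ (u+1) : ℝ)/2)) 2,
      ← Finset.sum_add_distrib, ← Finset.sum_sub_distrib,
      Finset.mul_sum (Finset.univ) _ (Real.sqrt (p * (1 - p))),
      Finset.sum_congr rfl fun ξ _ => per ξ, Finset.sum_add_distrib,
      ← Finset.mul_sum, ← Finset.mul_sum, hpair, mul_zero, add_zero]

lemma disc_unique {N : ℕ} (hN : 2 ≤ N) {s r : ℝ} (hs : 0 < s) (hr : 0 < r) (d : ℕ → ℝ)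
    (h0 : d 0 = 0) (hNd : d N = 0)
    (hrec : ∀ x, 1 ≤ x → x ≤ N - 1 → s * (d (x+1) + d (x-1) - 2 * d x) = r * d x) :
    ∀ x ≤ N, d x = 0 := by
  have key : ∀ (e : ℕ → ℝ), e 0 = 0 → e N = 0 →
      (∀ x, 1 ≤ x → x ≤ N - 1 → s * (e (x+1) + e (x-1) - 2 * e x) = r * e x) →
      ¬ (0 < e 1) := by
    intro e he0 heN herec hpos
    have mono : ∀ n, 1 ≤ n → n ≤ N → e 1 ≤ e n ∧ e (n-1) ≤ e n := by
      intro n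
      induction n with
      | zero => intro h1 _; exact absurd h1 (by norm_num)
      | succ m ih =>
        intro _ hm1
        by_cases hm : m = 0
        · subst hm
          refine ⟨le_rfl, ?_⟩
          simpa [he0] using hpos.le
        · obtain ⟨hA, hB⟩ := ih (by omega) (by omega)
          have heq := herec m (by omega) (by omega)
          have hem : 0 < e m := lt_of_lt_of_le hpos hA
          have h3 : e m < e (m+1) := by
            nlinarith [mul_nonneg hs.le (sub_nonneg.2 hB), mul_pos hr hem]
          refine ⟨le_of_lt (lt_of_le_of_lt hA h3), ?_⟩
          simpa [Nat.add_sub_cancel] using h3.le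
    have := (mono N (by omega) le_rfl).1
    rw [heN] at this
    linarith
  have hd1a := key d h0 hNd hrec
  have hd1b := key (fun n => -d n) (by simp [h0]) (by simp [hNd])
    (fun x hx1 hx2 => by linear_combination -(hrec x hx1 hx2))
  have hd1 : d 1 = 0 := by
    have h1 : ¬ 0 < d 1 := hd1a
    have h2 : ¬ 0 < -d 1 := hd1b
    push_neg at h1 h2
    linarith
  intro x
  induction x using Nat.strong_induction_on with
  | _ x ih =>
    intro hx
    match x with
    | 0 => exact h0
    | 1 => exact hd1
    | (m+2) =>
      have h := hrec (m+1) (by omega) (by omega)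
      rw [show m+1-1 = m from rfl] at h
      rw [ih m (by omega) (by omega), ih (m+1) (by omega) (by omega)] at h
      have hz : s * d (m+1+1) = 0 := by linarith
      have : d (m+1+1) = 0 := by
        rcases mul_eq_zero.1 hz with h'|h'
        · exact absurd h' hs.ne'
        · exact h'
      exact this

end Wasep

namespace Wasep

/-- The solution `a_{N,k}` of the boundary value problem equals the equilibrium
exponential moment of the height function: `a_{N,k}(x) = E_{π_{N,k}}[λ^{h(ξ)(x)/2}]`. -/
theorem bvp_is_equilibrium_moment
    (N k : ℕ) (p : ℝ) (hN : 2 ≤ N) (hk : 1 ≤ k ∧ k < N)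
    (hp : p ∈ Set.Ioo (1 / 2 : ℝ) 1)
    (a : ℕ → ℝ) (ha : IsBVP N k p a) (x : ℕ) (hx : x ≤ N) :
    a x = ∑ ξ : Conf N, statMeas N k p ξ * lam p ^ ((height ξ x : ℝ) / 2) := by
  obtain ⟨hk1, hkN⟩ := hk
  have hp' : p ∈ Set.Ioo (1/2 : ℝ) 1 := hp
  have hIs := g_isBVP N k p hN hk1 hkN hp'
  obtain ⟨ha0, haN, harec⟩ := ha
  obtain ⟨hg0, hgN, hgrec⟩ := hIs
  have hs := sqrt_pq_pos hp'
  have hr := rho_pos hp'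
  set g : ℕ → ℝ := fun x => ∑ ξ : Conf N, statMeas N k p ξ * lam p ^ ((height ξ x : ℝ)/2)
    with hgdef
  have hrec : ∀ y, 1 ≤ y → y ≤ N - 1 →
      Real.sqrt (p * (1 - p)) * ((a (y+1) - g (y+1)) + (a (y-1) - g (y-1))
        - 2 * (a y - g y)) = rho p * (a y - g y) := by
    intro y hy1 hy2
    have h1 := harec y hy1 hy2
    have h2 := hgrec y hy1 hy2
    linear_combination h1 - h2
  have := disc_unique hN hs hr (fun y => a y - g y)
    (by simp [ha0, hg0]) (by simp [haN, hgN]) hrec x hx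
  have h0 : a x - g x = 0 := this
  have hgx : g x = ∑ ξ : Conf N, statMeas N k p ξ * lam p ^ ((height ξ x : ℝ) / 2) := rfl
  linarith [h0, hgx.le, hgx.ge]

end Wasep
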